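/- Let H̃ = p₁² + p₂² + (a·q₁^(-2/3) + b)·q₂ on q₁ > 0 and Z̃₄ = p₁⁴ + 2a·p₁(p₁q₂ - 3p₂q₁)·q₁^(-2/3) - (9ab/4)·q₁^(4/3) - (a²/2)(9q₁² - 2q₂²)·q₁^(-4/3). Then {H̃, Z̃₄} = 0. -/

import Mathlib

noncomputable def pb (F G : ℝ → ℝ → ℝ → ℝ → ℝ) (q1 q2 p1 p2 : ℝ) : ℝ :=
  deriv (fun x => F x q2 p1 p2) q1 * deriv (fun x => G q1 q2 x p2) p1
  + deriv (fun x => F q1 x p1 p2) q2 * deriv (fun x => G q1 q2 p1 x) p2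
  - deriv (fun x => F q1 q2 x p2) p1 * deriv (fun x => G x q2 p1 p2) q1
  - deriv (fun x => F q1 q2 p1 x) p2 * deriv (fun x => G q1 x p1 p2) q2

noncomputable def Ht (a b : ℝ) (q1 q2 p1 p2 : ℝ) : ℝ :=
  p1 ^ 2 + p2 ^ 2 + (a * q1 ^ (-(2 : ℝ) / 3) + b) * q2

noncomputable def Z4 (a b : ℝ) (q1 q2 p1 p2 : ℝ) : ℝ :=
  p1 ^ 4 + 2 * a * p1 * (p1 * q2 - 3 * p2 * q1) * q1 ^ (-(2 : ℝ) / 3)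
  - (9 * a * b / 4) * q1 ^ ((4 : ℝ) / 3)
  - (a ^ 2 / 2) * (9 * q1 ^ 2 - 2 * q2 ^ 2) * q1 ^ (-(4 : ℝ) / 3)

theorem stmt5 (a b : ℝ) (q1 q2 p1 p2 : ℝ) (hq1 : 0 < q1) :
    pb (Ht a b) (Z4 a b) q1 q2 p1 p2 = 0 := by
  have hne : q1 ≠ 0 := hq1.ne'
  have hr2 : HasDerivAt (fun x : ℝ => x ^ (-(2:ℝ)/3)) ((-(2:ℝ)/3) * q1 ^ (-(2:ℝ)/3 - 1)) q1 :=
    Real.hasDerivAt_rpow_const (Or.inl hne)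
  have hr43 : HasDerivAt (fun x : ℝ => x ^ ((4:ℝ)/3)) (((4:ℝ)/3) * q1 ^ ((4:ℝ)/3 - 1)) q1 :=
    Real.hasDerivAt_rpow_const (Or.inl hne)
  have hr4m : HasDerivAt (fun x : ℝ => x ^ (-(4:ℝ)/3)) ((-(4:ℝ)/3) * q1 ^ (-(4:ℝ)/3 - 1)) q1 :=
    Real.hasDerivAt_rpow_const (Or.inl hne)
  have hHq1 : HasDerivAt (fun x => Ht a b x q2 p1 p2)
      (a * ((-(2:ℝ)/3) * q1 ^ (-(2:ℝ)/3 - 1)) * q2) q1 :=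
    (((hr2.const_mul a).add_const b).mul_const q2).const_add (p1 ^ 2 + p2 ^ 2)
  have hHq2 : HasDerivAt (fun x => Ht a b q1 x p1 p2)
      ((a * q1 ^ (-(2:ℝ)/3) + b) * 1) q2 :=
    ((hasDerivAt_id q2).const_mul (a * q1 ^ (-(2:ℝ)/3) + b)).const_add (p1 ^ 2 + p2 ^ 2)
  have hHp1 : HasDerivAt (fun x => Ht a b q1 q2 x p2) ((2:ℕ) * p1 ^ 1) p1 :=
    ((hasDerivAt_pow 2 p1).add_const (p2 ^ 2)).add_const ((a * q1 ^ (-(2:ℝ)/3) + b) * q2)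
  have hHp2 : HasDerivAt (fun x => Ht a b q1 q2 p1 x) ((2:ℕ) * p2 ^ 1) p2 :=
    ((hasDerivAt_pow 2 p2).const_add (p1 ^ 2)).add_const ((a * q1 ^ (-(2:ℝ)/3) + b) * q2)
  -- Z4 derivatives
  have hZq1 : HasDerivAt (fun x => Z4 a b x q2 p1 p2)
      ((2 * a * p1 * (-(3 * p2 * 1)) * q1 ^ (-(2:ℝ)/3)
        + 2 * a * p1 * (p1 * q2 - 3 * p2 * q1) * ((-(2:ℝ)/3) * q1 ^ (-(2:ℝ)/3 - 1)))
       - (9 * a * b / 4) * (((4:ℝ)/3) * q1 ^ ((4:ℝ)/3 - 1))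
       - ((a ^ 2 / 2) * (9 * ((2:ℕ) * q1 ^ 1)) * q1 ^ (-(4:ℝ)/3)
          + (a ^ 2 / 2) * (9 * q1 ^ 2 - 2 * q2 ^ 2) * ((-(4:ℝ)/3) * q1 ^ (-(4:ℝ)/3 - 1)))) q1 := by
    have h2 : HasDerivAt (fun x : ℝ => 2 * a * p1 * (p1 * q2 - 3 * p2 * x))
        (2 * a * p1 * (-(3 * p2 * 1))) q1 :=
      (((hasDerivAt_id q1).const_mul (3 * p2)).const_sub (p1 * q2)).const_mul (2 * a * p1)
    have h4 : HasDerivAt (fun x : ℝ => (a ^ 2 / 2) * (9 * x ^ 2 - 2 * q2 ^ 2))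
        ((a ^ 2 / 2) * (9 * ((2:ℕ) * q1 ^ 1))) q1 :=
      (((hasDerivAt_pow 2 q1).const_mul 9).sub_const (2 * q2 ^ 2)).const_mul (a ^ 2 / 2)
    exact (((h2.mul hr2).const_add (p1 ^ 4)).sub (hr43.const_mul (9 * a * b / 4))).sub
      (h4.mul hr4m)
  have hZq2 : HasDerivAt (fun x => Z4 a b q1 x p1 p2)
      (2 * a * p1 * (p1 * 1) * q1 ^ (-(2:ℝ)/3)
       - (a ^ 2 / 2) * (0 - 2 * ((2:ℕ) * q2 ^ 1)) * q1 ^ (-(4:ℝ)/3)) q2 := by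
    have h2 : HasDerivAt (fun x : ℝ => 2 * a * p1 * (p1 * x - 3 * p2 * q1))
        (2 * a * p1 * (p1 * 1)) q2 :=
      (((hasDerivAt_id q2).const_mul p1).sub_const (3 * p2 * q1)).const_mul (2 * a * p1)
    have h4 : HasDerivAt (fun x : ℝ => (a ^ 2 / 2) * (9 * q1 ^ 2 - 2 * x ^ 2))
        ((a ^ 2 / 2) * (0 - 2 * ((2:ℕ) * q2 ^ 1))) q2 := by
      have := (((hasDerivAt_pow 2 q2).const_mul 2).const_sub (9 * q1 ^ 2)).const_mul (a ^ 2 / 2)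
      refine this.congr_deriv ?_
      ring
    exact (((h2.mul_const (q1 ^ (-(2:ℝ)/3))).const_add (p1 ^ 4)).sub_const
      ((9 * a * b / 4) * q1 ^ ((4:ℝ)/3))).sub (h4.mul_const (q1 ^ (-(4:ℝ)/3)))
  have hZp1 : HasDerivAt (fun x => Z4 a b q1 q2 x p2)
      ((4:ℕ) * p1 ^ 3
       + (2 * a * 1 * (p1 * q2 - 3 * p2 * q1) + 2 * a * p1 * (1 * q2)) * q1 ^ (-(2:ℝ)/3)) p1 := by
    have h1 : HasDerivAt (fun x : ℝ => 2 * a * x) (2 * a * 1) p1 :=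
      (hasDerivAt_id p1).const_mul (2 * a)
    have h2 : HasDerivAt (fun x : ℝ => x * q2 - 3 * p2 * q1) (1 * q2) p1 :=
      ((hasDerivAt_id p1).mul_const q2).sub_const (3 * p2 * q1)
    exact (((hasDerivAt_pow 4 p1).add ((h1.mul h2).mul_const (q1 ^ (-(2:ℝ)/3)))).sub_const
      ((9 * a * b / 4) * q1 ^ ((4:ℝ)/3))).sub_const
      ((a ^ 2 / 2) * (9 * q1 ^ 2 - 2 * q2 ^ 2) * q1 ^ (-(4:ℝ)/3))
  have hZp2 : HasDerivAt (fun x => Z4 a b q1 q2 p1 x)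
      (2 * a * p1 * (-(3 * 1 * q1)) * q1 ^ (-(2:ℝ)/3)) p2 := by
    have h2 : HasDerivAt (fun x : ℝ => 2 * a * p1 * (p1 * q2 - 3 * x * q1))
        (2 * a * p1 * (-(3 * 1 * q1))) p2 :=
      ((((hasDerivAt_id p2).const_mul 3).mul_const q1).const_sub (p1 * q2)).const_mul (2 * a * p1)
    exact (((h2.mul_const (q1 ^ (-(2:ℝ)/3))).const_add (p1 ^ 4)).sub_const
      ((9 * a * b / 4) * q1 ^ ((4:ℝ)/3))).sub_const
      ((a ^ 2 / 2) * (9 * q1 ^ 2 - 2 * q2 ^ 2) * q1 ^ (-(4:ℝ)/3))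
  simp only [pb]
  rw [hHq1.deriv, hHq2.deriv, hHp1.deriv, hHp2.deriv, hZq1.deriv, hZq2.deriv, hZp1.deriv,
    hZp2.deriv]
  have e1 : q1 ^ (-(2:ℝ)/3 - 1) = q1 ^ (-(2:ℝ)/3) / q1 := by
    rw [Real.rpow_sub hq1, Real.rpow_one]
  have e2 : q1 ^ ((4:ℝ)/3 - 1) = q1 ^ ((4:ℝ)/3) / q1 := by
    rw [Real.rpow_sub hq1, Real.rpow_one]
  have e3 : q1 ^ (-(4:ℝ)/3 - 1) = q1 ^ (-(4:ℝ)/3) / q1 := by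
    rw [Real.rpow_sub hq1, Real.rpow_one]
  have e4 : q1 ^ ((4:ℝ)/3) = q1 ^ 2 * q1 ^ (-(2:ℝ)/3) := by
    rw [← Real.rpow_natCast q1 2, ← Real.rpow_add hq1]; norm_num
  have e5 : q1 ^ (-(4:ℝ)/3) = q1 ^ (-(2:ℝ)/3) * q1 ^ (-(2:ℝ)/3) := by
    rw [← Real.rpow_add hq1]; norm_num
  rw [e1, e2, e3, e4, e5]
  push_cast
  field_simp
  ring
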